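/- For ω ∈ ℝ³ with 0 < ‖ω‖ < 2π, the inverse tangent operator T⁻¹(ω) = I + (1/2) ω̃ + ((1 - γ(ω))/‖ω‖²) ω̃² with γ(ω) = (‖ω‖/2) cot(‖ω‖/2) satisfies T⁻¹(-ω) = T⁻¹(ω)ᵀ = T(ω)⁻ᵀ. -/

import Mathlib

open Matrix Real

noncomputable def norm3 (ω : Fin 3 → ℝ) : ℝ := Real.sqrt (ω 0 ^ 2 + ω 1 ^ 2 + ω 2 ^ 2)

def skew (ω : Fin 3 → ℝ) : Matrix (Fin 3) (Fin 3) ℝ :=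
  !![0, -ω 2, ω 1; ω 2, 0, -ω 0; -ω 1, ω 0, 0]


noncomputable def Tso (ω : Fin 3 → ℝ) : Matrix (Fin 3) (Fin 3) ℝ :=
  1 - (2 * (1 - Real.cos (norm3 ω)) / norm3 ω ^ 2 / 2) • skew ω
    + ((1 - Real.sin (norm3 ω) / norm3 ω) / norm3 ω ^ 2) • (skew ω ^ 2)


noncomputable def Tinv (ω : Fin 3 → ℝ) : Matrix (Fin 3) (Fin 3) ℝ :=
  1 + (1 / 2 : ℝ) • skew ω
    + ((1 - norm3 ω / 2 * Real.cot (norm3 ω / 2)) / norm3 ω ^ 2) • (skew ω ^ 2)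

lemma norm3_neg (ω : Fin 3 → ℝ) : norm3 (-ω) = norm3 ω := by
  simp [norm3]

lemma norm3_sq (ω : Fin 3 → ℝ) : norm3 ω ^ 2 = ω 0 ^ 2 + ω 1 ^ 2 + ω 2 ^ 2 := by
  rw [norm3, Real.sq_sqrt] ; positivity

lemma expand_mul (ω : Fin 3 → ℝ) (a d b c : ℝ) :
    (1 + a • skew ω + d • (skew ω ^ 2)) * (1 + b • skew ω + c • (skew ω ^ 2)) =
      1 + (a + b - (ω 0 ^ 2 + ω 1 ^ 2 + ω 2 ^ 2) * (a * c + b * d)) • skew ω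
        + (d + c + a * b - (ω 0 ^ 2 + ω 1 ^ 2 + ω 2 ^ 2) * (c * d)) • (skew ω ^ 2) := by
  ext i j
  fin_cases i <;> fin_cases j <;>
    simp [skew, pow_two, Matrix.mul_apply, Fin.sum_univ_three, Matrix.one_apply] <;> ring

theorem tinv_neg (ω : Fin 3 → ℝ) (h0 : 0 < norm3 ω) (h2 : norm3 ω < 2 * Real.pi) :
    Tinv (-ω) = (Tinv ω)ᵀ ∧ (Tinv ω)ᵀ = ((Tso ω)ᵀ)⁻¹ := by
  set θ := norm3 ω with hθ
  have hne : θ ≠ 0 := ne_of_gt h0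
  -- part 1
  have hskewT : skew (-ω) = (skew ω)ᵀ := by
    ext i j; fin_cases i <;> fin_cases j <;> simp [skew]
  have part1 : Tinv (-ω) = (Tinv ω)ᵀ := by
    rw [Tinv, Tinv, norm3_neg, hskewT]
    rw [Matrix.transpose_add, Matrix.transpose_add, Matrix.transpose_one,
      Matrix.transpose_smul, Matrix.transpose_smul, Matrix.transpose_pow]
  refine ⟨part1, ?_⟩
  -- trig setup
  have hx0 : 0 < θ / 2 := by linarith
  have hxπ : θ / 2 < Real.pi := by linarith
  have hsin : Real.sin (θ / 2) ≠ 0 := ne_of_gt (Real.sin_pos_of_pos_of_lt_pi hx0 hxπ)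
  have hcot : Real.cot (θ / 2) = Real.cos (θ / 2) / Real.sin (θ / 2) := Real.cot_eq_cos_div_sin _
  have hsinθ : Real.sin θ = 2 * Real.sin (θ / 2) * Real.cos (θ / 2) := by
    rw [← Real.sin_two_mul]; ring_nf
  have hcosθ : Real.cos θ = 1 - 2 * Real.sin (θ / 2) ^ 2 := by
    have hh := congrArg Real.cos (show θ = 2 * (θ / 2) by ring)
    rw [hh, Real.cos_two_mul]
    nlinarith [Real.sin_sq_add_cos_sq (θ / 2)]
  set d : ℝ := (1 - θ / 2 * Real.cot (θ / 2)) / θ ^ 2 with hd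
  set b : ℝ := -(2 * (1 - Real.cos θ) / θ ^ 2 / 2) with hb
  set c : ℝ := (1 - Real.sin θ / θ) / θ ^ 2 with hc
  have key : Tinv ω * Tso ω = 1 := by
    have hTso : Tso ω = 1 + b • skew ω + c • (skew ω ^ 2) := by
      rw [Tso, sub_eq_add_neg, ← neg_smul, ← hθ, ← hb, ← hc]
    have hTinv : Tinv ω = 1 + (1/2 : ℝ) • skew ω + d • (skew ω ^ 2) := by
      rw [Tinv, ← hθ, ← hd]
    rw [hTinv, hTso, expand_mul, ← norm3_sq, ← hθ]
    have e1 : 1/2 + b - θ ^ 2 * (1/2 * c + b * d) = 0 := by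
      rw [hb, hc, hd, hcot, hsinθ, hcosθ]
      field_simp
      ring_nf
    have e2 : d + c + 1/2 * b - θ ^ 2 * (c * d) = 0 := by
      rw [hb, hc, hd, hcot, hsinθ, hcosθ]
      field_simp
      linear_combination (-(2 * θ * Real.sin (θ / 2))) * Real.sin_sq_add_cos_sq (θ / 2)
    rw [e1, e2]
    simp
  have keyT : (Tso ω)ᵀ * (Tinv ω)ᵀ = 1 := by
    rw [← Matrix.transpose_mul, key, Matrix.transpose_one]
  exact (Matrix.inv_eq_right_inv keyT).symm
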